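/- Let D be a weak divergence on {0,1}^m with ‖D‖_∞ = sup_P D(P‖U_m) < ∞ and D ≥ 0, and let Ext : {0,1}^n × {0,1}^d → {0,1}^m be a (k,ε) D-extractor. Then for every 0 < η ≤ 1, Ext is a (k + log₂(1/η), ε + η·‖D‖_∞) average-case D-extractor: for every joint distribution (Z,X) with average conditional min-entropy H̃_∞(X|Z) ≥ k + log₂(1/η), E_{z∼Z}[ D(Ext(X|_{Z=z}, U_d) ‖ U_m) ] ≤ ε + η·‖D‖_∞. -/
import Mathlib

open scoped BigOperators

/-- A probability mass function on a finite set. -/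
def IsPMF {X : Type*} [Fintype X] (P : X → ℝ) : Prop :=
  (∀ x, 0 ≤ P x) ∧ ∑ x, P x = 1

/-- The output distribution `Ext(X, U_d)` of an extractor on source `X`. -/
noncomputable def extDist (n d m : ℕ)
    (Ext : (Fin n → Bool) → (Fin d → Bool) → (Fin m → Bool))
    (X : (Fin n → Bool) → ℝ) : (Fin m → Bool) → ℝ :=
  fun y => ∑ x, ∑ s, X x * ((2 : ℝ) ^ d)⁻¹ * (if Ext x s = y then 1 else 0)

lemma extDist_isPMF (n d m : ℕ)
    (Ext : (Fin n → Bool) → (Fin d → Bool) → (Fin m → Bool))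
    (X : (Fin n → Bool) → ℝ) (hX : IsPMF X) : IsPMF (extDist n d m Ext X) := by
  constructor
  · intro y
    refine Finset.sum_nonneg fun x _ => Finset.sum_nonneg fun s _ => ?_
    have := hX.1 x
    positivity
  · simp only [extDist]
    rw [Finset.sum_comm]
    have step : ∀ x : Fin n → Bool,
        (∑ y, ∑ s, X x * ((2 : ℝ) ^ d)⁻¹ * (if Ext x s = y then 1 else 0)) = X x := by
      intro x
      rw [Finset.sum_comm]
      have : ∀ s : Fin d → Bool,
          (∑ y, X x * ((2 : ℝ) ^ d)⁻¹ * (if Ext x s = y then 1 else 0))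
            = X x * ((2 : ℝ) ^ d)⁻¹ := by
        intro s
        rw [← Finset.mul_sum]
        simp
      rw [Finset.sum_congr rfl fun s _ => this s, Finset.sum_const, Finset.card_univ]
      have hc : (Fintype.card (Fin d → Bool) : ℝ) = 2 ^ d := by simp
      rw [nsmul_eq_mul, hc, mul_comm (X x), ← mul_assoc, mul_inv_cancel₀ (by positivity),
        one_mul]
    rw [Finset.sum_congr rfl fun x _ => step x, hX.2]

/-- Every extractor for a bounded nonnegative weak divergence `D` is an
average-case extractor, with a small loss in parameters. -/
theorem extractor_is_average_case (n d m : ℕ) (k ε : ℝ)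
    (D : ((Fin m → Bool) → ℝ) → ℝ) (B : ℝ)
    (hD0 : ∀ P : (Fin m → Bool) → ℝ, IsPMF P → 0 ≤ D P)
    (hDB : ∀ P : (Fin m → Bool) → ℝ, IsPMF P → D P ≤ B)
    (Ext : (Fin n → Bool) → (Fin d → Bool) → (Fin m → Bool))
    (hExt : ∀ X : (Fin n → Bool) → ℝ, IsPMF X →
      (∀ x, X x ≤ (2 : ℝ) ^ (-k)) → D (extDist n d m Ext X) ≤ ε)
    (η : ℝ) (hη0 : 0 < η) (hη1 : η ≤ 1)
    (ζ : Type) [Fintype ζ]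
    (J : ζ × (Fin n → Bool) → ℝ) (hJ : IsPMF J)
    (hHmin : ∑ z, (Finset.univ.sup' Finset.univ_nonempty fun x => J (z, x))
      ≤ (2 : ℝ) ^ (-(k + Real.logb 2 (1 / η)))) :
    ∑ z, (∑ x, J (z, x))
        * D (extDist n d m Ext (fun x => J (z, x) / ∑ x', J (z, x')))
      ≤ ε + η * B := by
  classical
  set L : ℝ := Real.logb 2 (1 / η) with hL
  set p : ζ → ℝ := fun z => ∑ x, J (z, x) with hpdef
  set M : ζ → ℝ := fun z => Finset.univ.sup' Finset.univ_nonempty fun x => J (z, x)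
    with hMdef
  have hJ0 : ∀ q, 0 ≤ J q := hJ.1
  have hp0 : ∀ z, 0 ≤ p z := fun z => Finset.sum_nonneg fun x _ => hJ0 _
  have hJM : ∀ z x, J (z, x) ≤ M z := fun z x => Finset.le_sup' (fun x => J (z, x)) (Finset.mem_univ x)
  have hM0 : ∀ z, 0 ≤ M z := fun z =>
    le_trans (hJ0 (z, fun _ => false)) (hJM z (fun _ => false))
  have hJp : ∀ z x, J (z, x) ≤ p z := fun z x =>
    Finset.single_le_sum (fun x _ => hJ0 (z, x)) (Finset.mem_univ x)
  have hpsum : ∑ z, p z = 1 := by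
    rw [hpdef, ← hJ.2, Fintype.sum_prod_type]
  have hcard : (Fintype.card (Fin n → Bool) : ℝ) = 2 ^ n := by simp
  -- p z ≤ 2^n * M z
  have hpM : ∀ z, p z ≤ 2 ^ n * M z := by
    intro z
    calc p z ≤ ∑ _x : Fin n → Bool, M z :=
          Finset.sum_le_sum fun x _ => hJM z x
      _ = 2 ^ n * M z := by
          rw [Finset.sum_const, Finset.card_univ, nsmul_eq_mul, hcard]
  -- ∑ M z ≥ 2^(-n)
  have hMsum : (2 : ℝ) ^ (-(n : ℝ)) ≤ ∑ z, M z := by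
    have h1 : (1 : ℝ) ≤ 2 ^ n * ∑ z, M z := by
      rw [← hpsum, Finset.mul_sum]
      exact Finset.sum_le_sum fun z _ => hpM z
    have h2 : ((2 : ℝ) ^ n)⁻¹ ≤ ∑ z, M z := by
      rw [inv_le_iff_one_le_mul₀ (by positivity)]
      linarith [h1]
    calc (2 : ℝ) ^ (-(n : ℝ)) = ((2 : ℝ) ^ n)⁻¹ := by
          rw [Real.rpow_neg (by norm_num), Real.rpow_natCast]
      _ ≤ ∑ z, M z := h2
  have hL0 : 0 ≤ L := Real.logb_nonneg (by norm_num)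
    (by rw [le_div_iff₀ hη0]; linarith)
  have hkLn : k + L ≤ (n : ℝ) := by
    have h := le_trans hMsum hHmin
    have := (Real.rpow_le_rpow_left_iff (by norm_num : (1:ℝ) < 2)).mp h
    linarith
  have hkn : k ≤ (n : ℝ) := by linarith
  -- ε ≥ 0 and B ≥ 0 via the uniform source
  have hU : IsPMF (fun _ : Fin n → Bool => ((2 : ℝ) ^ n)⁻¹) := by
    constructor
    · intro _; positivity
    · rw [Finset.sum_const, Finset.card_univ, nsmul_eq_mul, hcard,
        mul_inv_cancel₀ (by positivity)]
  have hUmax : ∀ x : Fin n → Bool, ((2 : ℝ) ^ n)⁻¹ ≤ (2 : ℝ) ^ (-k) := by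
    intro x
    calc ((2 : ℝ) ^ n)⁻¹ = (2 : ℝ) ^ (-(n : ℝ)) := by
          rw [Real.rpow_neg (by norm_num), Real.rpow_natCast]
      _ ≤ (2 : ℝ) ^ (-k) :=
          Real.rpow_le_rpow_of_exponent_le (by norm_num) (by linarith)
  have hUPMF := extDist_isPMF n d m Ext _ hU
  have hε0 : 0 ≤ ε := le_trans (hD0 _ hUPMF) (hExt _ hU hUmax)
  have hB0 : 0 ≤ B := le_trans (hD0 _ hUPMF) (hDB _ hUPMF)
  -- good / bad split
  set G : Finset ζ := Finset.univ.filter (fun z => M z ≤ p z * (2 : ℝ) ^ (-k)) with hG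
  have hpz_pos_of_bad : ∀ z ∈ Finset.univ.filter
      (fun z => ¬ (M z ≤ p z * (2 : ℝ) ^ (-k))), 0 < p z := by
    intro z hz
    rw [Finset.mem_filter] at hz
    rcases lt_or_eq_of_le (hp0 z) with h | h
    · exact h
    · exfalso
      apply hz.2
      have hMz : M z ≤ 0 := by
        apply Finset.sup'_le
        intro x _
        have h1 := hJp z x
        rw [← h] at h1
        exact h1
      have : (0:ℝ) ≤ p z * (2 : ℝ) ^ (-k) := by positivity
      linarith
  -- conditional distribution is a PMF when p z > 0
  have hcondPMF : ∀ z, 0 < p z → IsPMF (fun x => J (z, x) / ∑ x', J (z, x')) := by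
    intro z hz
    constructor
    · intro x; exact div_nonneg (hJ0 _) (hp0 z)
    · rw [← Finset.sum_div, div_self (ne_of_gt hz)]
  -- per-z bounds
  have hgood : ∀ z ∈ G,
      p z * D (extDist n d m Ext (fun x => J (z, x) / ∑ x', J (z, x'))) ≤ p z * ε := by
    intro z hz
    rw [hG, Finset.mem_filter] at hz
    rcases lt_or_eq_of_le (hp0 z) with h | h
    · refine mul_le_mul_of_nonneg_left ?_ (hp0 z)
      refine hExt _ (hcondPMF z h) ?_
      intro x
      rw [div_le_iff₀ h]
      calc J (z, x) ≤ M z := hJM z x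
        _ ≤ p z * (2 : ℝ) ^ (-k) := hz.2
        _ = (2 : ℝ) ^ (-k) * p z := mul_comm _ _
    · rw [← h, zero_mul, zero_mul]
  have hbad : ∀ z ∈ Finset.univ.filter (fun z => ¬ (M z ≤ p z * (2 : ℝ) ^ (-k))),
      p z * D (extDist n d m Ext (fun x => J (z, x) / ∑ x', J (z, x'))) ≤ p z * B := by
    intro z hz
    have hpz := hpz_pos_of_bad z hz
    refine mul_le_mul_of_nonneg_left ?_ (hp0 z)
    exact hDB _ (extDist_isPMF n d m Ext _ (hcondPMF z hpz))
  -- mass of bad set is at most η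
  have hbadmass : ∑ z ∈ Finset.univ.filter (fun z => ¬ (M z ≤ p z * (2 : ℝ) ^ (-k))),
      p z ≤ η := by
    have step1 : ∀ z ∈ Finset.univ.filter (fun z => ¬ (M z ≤ p z * (2 : ℝ) ^ (-k))),
        p z ≤ (2 : ℝ) ^ k * M z := by
      intro z hz
      rw [Finset.mem_filter] at hz
      have h1 : p z * (2 : ℝ) ^ (-k) < M z := lt_of_not_ge hz.2
      have h2 : p z * (2 : ℝ) ^ (-k) * (2 : ℝ) ^ k ≤ M z * (2 : ℝ) ^ k :=
        mul_le_mul_of_nonneg_right h1.le (by positivity)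
      have h3 : (2 : ℝ) ^ (-k) * (2 : ℝ) ^ k = 1 := by
        rw [← Real.rpow_add (by norm_num)]; norm_num
      calc p z = p z * ((2 : ℝ) ^ (-k) * (2 : ℝ) ^ k) := by rw [h3, mul_one]
        _ = p z * (2 : ℝ) ^ (-k) * (2 : ℝ) ^ k := by ring
        _ ≤ M z * (2 : ℝ) ^ k := h2
        _ = (2 : ℝ) ^ k * M z := mul_comm _ _
    calc ∑ z ∈ Finset.univ.filter (fun z => ¬ (M z ≤ p z * (2 : ℝ) ^ (-k))), p z
        ≤ ∑ z ∈ Finset.univ.filter (fun z => ¬ (M z ≤ p z * (2 : ℝ) ^ (-k))),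
          (2 : ℝ) ^ k * M z := Finset.sum_le_sum step1
      _ ≤ ∑ z, (2 : ℝ) ^ k * M z := by
          refine Finset.sum_le_sum_of_subset_of_nonneg (Finset.filter_subset _ _) ?_
          intro z _ _
          have := hM0 z; positivity
      _ = (2 : ℝ) ^ k * ∑ z, M z := by rw [← Finset.mul_sum]
      _ ≤ (2 : ℝ) ^ k * (2 : ℝ) ^ (-(k + L)) :=
          mul_le_mul_of_nonneg_left hHmin (by positivity)
      _ = (2 : ℝ) ^ (-L) := by
          rw [← Real.rpow_add (by norm_num : (0:ℝ) < 2)]; ring_nf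
      _ = η := by
          rw [hL, Real.rpow_neg (by norm_num), Real.rpow_logb (by norm_num) (by norm_num)
            (by positivity), one_div, inv_inv]
  -- assemble
  have hsplit := Finset.sum_filter_add_sum_filter_not Finset.univ
    (fun z => M z ≤ p z * (2 : ℝ) ^ (-k))
    (fun z => p z * D (extDist n d m Ext (fun x => J (z, x) / ∑ x', J (z, x'))))
  calc ∑ z, p z * D (extDist n d m Ext (fun x => J (z, x) / ∑ x', J (z, x')))
      = (∑ z ∈ G, p z * D (extDist n d m Ext (fun x => J (z, x) / ∑ x', J (z, x'))))
        + ∑ z ∈ Finset.univ.filter (fun z => ¬ (M z ≤ p z * (2 : ℝ) ^ (-k))),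
          p z * D (extDist n d m Ext (fun x => J (z, x) / ∑ x', J (z, x'))) :=
        hsplit.symm
    _ ≤ (∑ z ∈ G, p z * ε)
        + ∑ z ∈ Finset.univ.filter (fun z => ¬ (M z ≤ p z * (2 : ℝ) ^ (-k))), p z * B :=
        add_le_add (Finset.sum_le_sum hgood) (Finset.sum_le_sum hbad)
    _ = (∑ z ∈ G, p z) * ε
        + (∑ z ∈ Finset.univ.filter (fun z => ¬ (M z ≤ p z * (2 : ℝ) ^ (-k))), p z) * B := by
        rw [Finset.sum_mul, Finset.sum_mul]
    _ ≤ 1 * ε + η * B := by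
        refine add_le_add (mul_le_mul_of_nonneg_right ?_ hε0)
          (mul_le_mul_of_nonneg_right hbadmass hB0)
        rw [← hpsum]
        exact Finset.sum_le_sum_of_subset_of_nonneg (Finset.filter_subset _ _)
          fun z _ _ => hp0 z
    _ = ε + η * B := by rw [one_mul]
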